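/- In the EWL quantum game of a 2×2 game G where the two payoff functions P₁ and P₂ have no common maximizer on {C,D}×{C,D}, there is no pure-strategy Nash equilibrium: for every pair of unit quaternions (p,q), some player can strictly improve their EWL payoff by deviating. -/

import Mathlib

open Quaternion

inductive Strat | C | D
deriving DecidableEq

instance : Fintype Strat :=
  ⟨{Strat.C, Strat.D}, fun x => by cases x <;> simp⟩

open Strat

/-- The EWL payoff for a player with classical payoff function `P`. -/
noncomputable def ewlPayoff (P : Strat → Strat → ℝ) (p q : Quaternion ℝ) : ℝ :=
  (p * q).re ^ 2 * P C C + (p * q).imI ^ 2 * P C D +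
    (p * q).imJ ^ 2 * P D C + (p * q).imK ^ 2 * P D D

/-- basis quaternions for the four outcomes -/
def bq : Strat × Strat → Quaternion ℝ
  | (C, C) => ⟨1,0,0,0⟩
  | (C, D) => ⟨0,1,0,0⟩
  | (D, C) => ⟨0,0,1,0⟩
  | (D, D) => ⟨0,0,0,1⟩

lemma norm_bq (s : Strat × Strat) : ‖bq s‖ = 1 := by
  have h : normSq (bq s) = 1 := by
    obtain ⟨s1, s2⟩ := s
    cases s1 <;> cases s2 <;> rw [Quaternion.normSq_def'] <;> simp [bq] <;> norm_num
  have h2 : ‖bq s‖ * ‖bq s‖ = 1 := by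
    rw [← Quaternion.normSq_eq_norm_mul_self, h]
  nlinarith [norm_nonneg (bq s)]

lemma ewl_bq (P : Strat → Strat → ℝ) (s : Strat × Strat) (p q : Quaternion ℝ)
    (h : p * q = bq s) : ewlPayoff P p q = P s.1 s.2 := by
  obtain ⟨s1, s2⟩ := s
  unfold ewlPayoff
  rw [h]
  cases s1 <;> cases s2 <;> simp [bq] <;> ring

lemma key (a b c d x1 x2 x3 x4 e : ℝ) (ha : 0 ≤ a) (hb : 0 ≤ b) (hc : 0 ≤ c) (hd : 0 ≤ d)
    (hsum : a + b + c + d = 1) (heq : a*x1 + b*x2 + c*x3 + d*x4 = e)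
    (h1 : x1 ≤ e) (h2 : x2 ≤ e) (h3 : x3 ≤ e) (h4 : x4 ≤ e) (hpos : 0 < a) : e ≤ x1 := by
  by_contra hlt
  push_neg at hlt
  have hz : a*(e-x1) + b*(e-x2) + c*(e-x3) + d*(e-x4) = 0 := by
    linear_combination e * hsum - heq
  nlinarith [mul_nonneg hb (sub_nonneg.2 h2), mul_nonneg hc (sub_nonneg.2 h3),
    mul_nonneg hd (sub_nonneg.2 h4), mul_pos hpos (sub_pos.2 hlt)]

theorem ewl_no_pure_nash (P1 P2 : Strat → Strat → ℝ)
    (hno : ¬ ∃ s : Strat × Strat,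
      (∀ t : Strat × Strat, P1 t.1 t.2 ≤ P1 s.1 s.2) ∧
      (∀ t : Strat × Strat, P2 t.1 t.2 ≤ P2 s.1 s.2)) :
    ∀ p q : Quaternion ℝ, ‖p‖ = 1 → ‖q‖ = 1 →
      (∃ p' : Quaternion ℝ, ‖p'‖ = 1 ∧ ewlPayoff P1 p q < ewlPayoff P1 p' q) ∨
      (∃ q' : Quaternion ℝ, ‖q'‖ = 1 ∧ ewlPayoff P2 p q < ewlPayoff P2 p q') := by
  intro p q hp hq
  by_contra hcon
  push_neg at hcon
  obtain ⟨hA, hB⟩ := hcon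
  have hq0 : q ≠ 0 := by
    intro h; rw [h, norm_zero] at hq; norm_num at hq
  have hp0 : p ≠ 0 := by
    intro h; rw [h, norm_zero] at hp; norm_num at hp
  -- deviations achieve each pure payoff
  have h1 : ∀ t : Strat × Strat, P1 t.1 t.2 ≤ ewlPayoff P1 p q := by
    intro t
    have hn : ‖bq t * q⁻¹‖ = 1 := by
      rw [norm_mul, norm_bq, norm_inv, hq]; norm_num
    have hm : (bq t * q⁻¹) * q = bq t := by
      rw [mul_assoc, inv_mul_cancel₀ hq0, mul_one]
    have := hA (bq t * q⁻¹) hn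
    rwa [ewl_bq P1 t _ q hm] at this
  have h2 : ∀ t : Strat × Strat, P2 t.1 t.2 ≤ ewlPayoff P2 p q := by
    intro t
    have hn : ‖p⁻¹ * bq t‖ = 1 := by
      rw [norm_mul, norm_bq, norm_inv, hp]; norm_num
    have hm : p * (p⁻¹ * bq t) = bq t := by
      rw [← mul_assoc, mul_inv_cancel₀ hp0, one_mul]
    have := hB (p⁻¹ * bq t) hn
    rwa [ewl_bq P2 t p _ hm] at this
  -- weights
  set a := (p * q).re ^ 2 with ha'
  set b := (p * q).imI ^ 2 with hb'
  set c := (p * q).imJ ^ 2 with hc'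
  set d := (p * q).imK ^ 2 with hd'
  have hsum : a + b + c + d = 1 := by
    have : normSq (p * q) = 1 := by
      rw [Quaternion.normSq_eq_norm_mul_self, norm_mul, hp, hq]; norm_num
    rw [Quaternion.normSq_def'] at this
    simp only [ha', hb', hc', hd']
    linarith
  have ha0 : 0 ≤ a := sq_nonneg _
  have hb0 : 0 ≤ b := sq_nonneg _
  have hc0 : 0 ≤ c := sq_nonneg _
  have hd0 : 0 ≤ d := sq_nonneg _
  have he1 : a * P1 C C + b * P1 C D + c * P1 D C + d * P1 D D = ewlPayoff P1 p q := by
    unfold ewlPayoff; ring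
  have he2 : a * P2 C C + b * P2 C D + c * P2 D C + d * P2 D D = ewlPayoff P2 p q := by
    unfold ewlPayoff; ring
  apply hno
  -- find a positive weight and show that outcome maximizes both
  rcases lt_or_eq_of_le ha0 with hpos | hz
  · refine ⟨(C, C), fun t => le_trans (h1 t) ?_, fun t => le_trans (h2 t) ?_⟩
    · exact key a b c d _ _ _ _ _ ha0 hb0 hc0 hd0 hsum he1 (h1 (C,C)) (h1 (C,D)) (h1 (D,C)) (h1 (D,D)) hpos
    · exact key a b c d _ _ _ _ _ ha0 hb0 hc0 hd0 hsum he2 (h2 (C,C)) (h2 (C,D)) (h2 (D,C)) (h2 (D,D)) hpos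
  rcases lt_or_eq_of_le hb0 with hpos | hzb
  · refine ⟨(C, D), fun t => le_trans (h1 t) ?_, fun t => le_trans (h2 t) ?_⟩
    · exact key b a c d _ _ _ _ _ hb0 ha0 hc0 hd0 (by linarith) (by linarith) (h1 (C,D)) (h1 (C,C)) (h1 (D,C)) (h1 (D,D)) hpos
    · exact key b a c d _ _ _ _ _ hb0 ha0 hc0 hd0 (by linarith) (by linarith) (h2 (C,D)) (h2 (C,C)) (h2 (D,C)) (h2 (D,D)) hpos
  rcases lt_or_eq_of_le hc0 with hpos | hzc
  · refine ⟨(D, C), fun t => le_trans (h1 t) ?_, fun t => le_trans (h2 t) ?_⟩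
    · exact key c a b d _ _ _ _ _ hc0 ha0 hb0 hd0 (by linarith) (by linarith) (h1 (D,C)) (h1 (C,C)) (h1 (C,D)) (h1 (D,D)) hpos
    · exact key c a b d _ _ _ _ _ hc0 ha0 hb0 hd0 (by linarith) (by linarith) (h2 (D,C)) (h2 (C,C)) (h2 (C,D)) (h2 (D,D)) hpos
  have hposd : 0 < d := by linarith
  refine ⟨(D, D), fun t => le_trans (h1 t) ?_, fun t => le_trans (h2 t) ?_⟩
  · exact key d a b c _ _ _ _ _ hd0 ha0 hb0 hc0 (by linarith) (by linarith) (h1 (D,D)) (h1 (C,C)) (h1 (C,D)) (h1 (D,C)) hposd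
  · exact key d a b c _ _ _ _ _ hd0 ha0 hb0 hc0 (by linarith) (by linarith) (h2 (D,D)) (h2 (C,C)) (h2 (C,D)) (h2 (D,C)) hposd
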